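/- (Equation (2.15): posterior median of a spike-and-slab Gaussian mixture is a soft thresholding rule) Let 0 ≤ l < 1/2, m ∈ ℝ, s > 0, and let μ = l·δ₀ + (1−l)·N(m, s²) be the mixture on ℝ of a point mass at 0 with weight l and a Gaussian of mean m and variance s² with weight 1−l. Set Q = Φ⁻¹(1/(2(1−l))) and t* = sgn(m)·(|m| − s·Q)₊. Then t* is a median of μ, i.e., μ((−∞,t*]) ≥ 1/2 and μ([t*,∞)) ≥ 1/2; in particular t* = 0 if and only if |m| ≤ s·Q. -/

import Mathlib

open MeasureTheory ProbabilityTheory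
open scoped ENNReal

/-- The standard normal cumulative distribution function `Φ`. -/
noncomputable def stdNormalCDF (x : ℝ) : ℝ :=
  (gaussianReal 0 1 (Set.Iic x)).toReal

lemma stdNormalCDF_ofReal (x : ℝ) :
    gaussianReal 0 1 (Set.Iic x) = ENNReal.ofReal (stdNormalCDF x) :=
  (ENNReal.ofReal_toReal (measure_ne_top _ _)).symm

lemma stdNormalCDF_nonneg (x : ℝ) : 0 ≤ stdNormalCDF x := ENNReal.toReal_nonneg

lemma stdNormalCDF_le_one (x : ℝ) : stdNormalCDF x ≤ 1 := by
  have h := prob_le_one (μ := gaussianReal 0 1) (s := Set.Iic x)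
  simpa [stdNormalCDF] using ENNReal.toReal_mono (by norm_num) h

lemma stdNormalCDF_mono : Monotone stdNormalCDF := by
  intro x y hxy
  exact ENNReal.toReal_mono (measure_ne_top _ _) (measure_mono (Set.Iic_subset_Iic.2 hxy))

lemma stdNormalCDF_strictMono : StrictMono stdNormalCDF := by
  intro x y hxy
  have hdisj : Disjoint (Set.Iic x) (Set.Ioc x y) := Set.Iic_disjoint_Ioc le_rfl
  have hunion : Set.Iic x ∪ Set.Ioc x y = Set.Iic y := Set.Iic_union_Ioc_eq_Iic hxy.le
  have hm : gaussianReal 0 1 (Set.Iic y)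
      = gaussianReal 0 1 (Set.Iic x) + gaussianReal 0 1 (Set.Ioc x y) := by
    rw [← hunion, measure_union hdisj measurableSet_Ioc]
  have hpos : gaussianReal 0 1 (Set.Ioc x y) ≠ 0 := by
    intro h0
    have := gaussianReal_absolutelyContinuous' 0 one_ne_zero h0
    rw [Real.volume_Ioc] at this
    simp at this
    linarith
  have hfin : gaussianReal 0 1 (Set.Iic y) ≠ ⊤ := measure_ne_top _ _
  have hlt : gaussianReal 0 1 (Set.Iic x) < gaussianReal 0 1 (Set.Iic y) := by
    rw [hm]
    exact ENNReal.lt_add_right (by rw [hm] at hfin; exact fun h => hfin (by simp [h])) hpos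
  exact ENNReal.toReal_strict_mono hfin hlt

lemma stdNormalCDF_neg (x : ℝ) : stdNormalCDF (-x) = 1 - stdNormalCDF x := by
  have hmap : (gaussianReal 0 1).map ((-1 : ℝ) * ·) = gaussianReal 0 1 := by
    rw [gaussianReal_map_const_mul]
    norm_num
  have hpre : ((-1 : ℝ) * ·) ⁻¹' (Set.Iic (-x)) = Set.Ici x := by
    ext y
    simp
  have h1 : gaussianReal 0 1 (Set.Iic (-x)) = gaussianReal 0 1 (Set.Ici x) := by
    conv_lhs => rw [← hmap]
    rw [Measure.map_apply (by fun_prop) measurableSet_Iic, hpre]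
  have hIio : gaussianReal 0 1 (Set.Iio x) = gaussianReal 0 1 (Set.Iic x) := by
    refine le_antisymm (measure_mono Set.Iio_subset_Iic_self) ?_
    have hsing : gaussianReal 0 1 {x} = 0 :=
      gaussianReal_absolutelyContinuous 0 one_ne_zero Real.volume_singleton
    calc gaussianReal 0 1 (Set.Iic x) ≤ gaussianReal 0 1 (Set.Iio x) + gaussianReal 0 1 {x} := by
          rw [← Set.Iio_union_right]; exact measure_union_le _ _
      _ = gaussianReal 0 1 (Set.Iio x) := by rw [hsing, add_zero]
  have h2 : gaussianReal 0 1 (Set.Ici x) = 1 - gaussianReal 0 1 (Set.Iic x) := by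
    rw [← hIio, show Set.Ici x = (Set.Iio x)ᶜ from Set.compl_Iio.symm]
    rw [measure_compl measurableSet_Iio (measure_ne_top _ _), measure_univ]
  have h3 : gaussianReal 0 1 (Set.Iic (-x)) = 1 - gaussianReal 0 1 (Set.Iic x) := h1.trans h2
  have := congrArg ENNReal.toReal h3
  rw [stdNormalCDF, this, ENNReal.toReal_sub_of_le (prob_le_one) (by norm_num)]
  norm_num [stdNormalCDF]

lemma stdNormalCDF_zero : stdNormalCDF 0 = 1 / 2 := by
  have := stdNormalCDF_neg 0
  rw [neg_zero] at this
  linarith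

lemma gauss_Iic (m s : ℝ) (hs : 0 < s) (x : ℝ) :
    gaussianReal m ⟨s ^ 2, sq_nonneg s⟩ (Set.Iic x)
      = ENNReal.ofReal (stdNormalCDF ((x - m) / s)) := by
  have hmap : gaussianReal m ⟨s ^ 2, sq_nonneg s⟩
      = (gaussianReal 0 1).map (fun y => s * y + m) := by
    have h1 : (gaussianReal 0 1).map (s * ·) = gaussianReal 0 ⟨s ^ 2, sq_nonneg s⟩ := by
      rw [gaussianReal_map_const_mul]
      norm_num
      rfl
    have h2 : ((gaussianReal 0 1).map (s * ·)).map (· + m)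
        = (gaussianReal 0 1).map (fun y => s * y + m) := by
      rw [Measure.map_map (by fun_prop) (by fun_prop)]
      rfl
    rw [← h2, h1, gaussianReal_map_add_const (v := (⟨s ^ 2, sq_nonneg s⟩ : NNReal)), zero_add]
  have hpre : (fun y => s * y + m) ⁻¹' (Set.Iic x) = Set.Iic ((x - m) / s) := by
    ext y
    simp [Set.mem_Iic, le_div_iff₀ hs]
    constructor <;> intro h <;> nlinarith
  rw [hmap, Measure.map_apply (by fun_prop) measurableSet_Iic, hpre, stdNormalCDF_ofReal]

lemma gauss_Ici (m s : ℝ) (hs : 0 < s) (x : ℝ) :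
    gaussianReal m ⟨s ^ 2, sq_nonneg s⟩ (Set.Ici x)
      = ENNReal.ofReal (1 - stdNormalCDF ((x - m) / s)) := by
  have hv : (⟨s ^ 2, sq_nonneg s⟩ : NNReal) ≠ 0 := by
    simp [← NNReal.coe_ne_zero]; positivity
  have hsing : gaussianReal m ⟨s ^ 2, sq_nonneg s⟩ {x} = 0 :=
    gaussianReal_absolutelyContinuous m hv Real.volume_singleton
  have hIio : gaussianReal m ⟨s ^ 2, sq_nonneg s⟩ (Set.Iio x)
      = gaussianReal m ⟨s ^ 2, sq_nonneg s⟩ (Set.Iic x) := by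
    refine le_antisymm (measure_mono Set.Iio_subset_Iic_self) ?_
    calc gaussianReal m ⟨s ^ 2, sq_nonneg s⟩ (Set.Iic x)
        ≤ gaussianReal m ⟨s ^ 2, sq_nonneg s⟩ (Set.Iio x)
          + gaussianReal m ⟨s ^ 2, sq_nonneg s⟩ {x} := by
          rw [← Set.Iio_union_right]; exact measure_union_le _ _
      _ = _ := by rw [hsing, add_zero]
  haveI := instIsProbabilityMeasureGaussianReal m ⟨s ^ 2, sq_nonneg s⟩
  rw [show Set.Ici x = (Set.Iio x)ᶜ from Set.compl_Iio.symm,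
    measure_compl measurableSet_Iio (measure_ne_top _ _), measure_univ, hIio,
    gauss_Iic m s hs, ENNReal.ofReal_sub _ (stdNormalCDF_nonneg _), ENNReal.ofReal_one]

lemma half_le_ofReal {a : ℝ} (ha : 1 / 2 ≤ a) : (1 / 2 : ℝ≥0∞) ≤ ENNReal.ofReal a := by
  rw [show (1/2 : ℝ≥0∞) = ENNReal.ofReal (1/2) by
    rw [ENNReal.ofReal_div_of_pos two_pos, ENNReal.ofReal_one, ENNReal.ofReal_ofNat]]
  exact ENNReal.ofReal_le_ofReal ha

/-- **Equation (2.15): the posterior median of a spike-and-slab Gaussian mixture is a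
soft thresholding rule.**  Let `0 ≤ l < 1/2`, `m ∈ ℝ`, `s > 0`, and let
`μ = l δ₀ + (1-l) N(m, s²)`.  Let `Q = Φ⁻¹(1/(2(1-l)))`, i.e. the (unique) real with
`Φ Q = 1/(2(1-l))`, and set `t* = sgn(m) (|m| - s Q)₊`.  Then `t*` is a median of `μ`,
and `t* = 0 ↔ |m| ≤ s Q`. -/
theorem spike_slab_posterior_median_soft_threshold
    (l m s Q : ℝ) (hl0 : 0 ≤ l) (hl : l < 1 / 2) (hs : 0 < s)
    (hQ : stdNormalCDF Q = 1 / (2 * (1 - l)))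
    (μ : Measure ℝ)
    (hμ : μ = ENNReal.ofReal l • Measure.dirac (0 : ℝ) +
      ENNReal.ofReal (1 - l) • gaussianReal m ⟨s ^ 2, sq_nonneg s⟩)
    (tstar : ℝ)
    (htstar : tstar = Real.sign m * max (|m| - s * Q) 0) :
    μ (Set.Iic tstar) ≥ 1 / 2 ∧ μ (Set.Ici tstar) ≥ 1 / 2 ∧
      (tstar = 0 ↔ |m| ≤ s * Q) := by
  have h1l : (0:ℝ) < 1 - l := by linarith
  have hkey1 : l + (1 - l) * (1 - stdNormalCDF Q) = 1 / 2 := by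
    rw [hQ]; field_simp; ring
  have hkey2 : (1 - l) * stdNormalCDF Q = 1 / 2 := by
    rw [hQ]; field_simp
  have hQhalf : 1 / 2 ≤ stdNormalCDF Q := by
    rw [hQ, div_le_div_iff₀ (by norm_num) (by linarith)]; linarith
  have hQ0 : 0 ≤ Q := by
    by_contra h
    push_neg at h
    have := stdNormalCDF_strictMono h
    rw [stdNormalCDF_zero] at this
    linarith
  have hsQ : 0 ≤ s * Q := mul_nonneg hs.le hQ0
  have hIic : ∀ t : ℝ, 0 ≤ t → μ (Set.Iic t) = ENNReal.ofReal l +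
      ENNReal.ofReal (1 - l) * ENNReal.ofReal (stdNormalCDF ((t - m) / s)) := by
    intro t ht
    rw [hμ]
    simp [Measure.add_apply, Measure.smul_apply, smul_eq_mul, Measure.dirac_apply,
      Set.indicator, Set.mem_Iic, ht, gauss_Iic m s hs]
  have hIic' : ∀ t : ℝ, t < 0 → μ (Set.Iic t) =
      ENNReal.ofReal (1 - l) * ENNReal.ofReal (stdNormalCDF ((t - m) / s)) := by
    intro t ht
    rw [hμ]
    simp [Measure.add_apply, Measure.smul_apply, smul_eq_mul, Measure.dirac_apply,
      Set.indicator, Set.mem_Iic, not_le.2 ht, gauss_Iic m s hs]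
  have hIci : ∀ t : ℝ, t ≤ 0 → μ (Set.Ici t) = ENNReal.ofReal l +
      ENNReal.ofReal (1 - l) * ENNReal.ofReal (1 - stdNormalCDF ((t - m) / s)) := by
    intro t ht
    rw [hμ]
    simp [Measure.add_apply, Measure.smul_apply, smul_eq_mul, Measure.dirac_apply,
      Set.indicator, Set.mem_Ici, ht, gauss_Ici m s hs]
  have hIci' : ∀ t : ℝ, 0 < t → μ (Set.Ici t) =
      ENNReal.ofReal (1 - l) * ENNReal.ofReal (1 - stdNormalCDF ((t - m) / s)) := by
    intro t ht
    rw [hμ]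
    simp [Measure.add_apply, Measure.smul_apply, smul_eq_mul, Measure.dirac_apply,
      Set.indicator, Set.mem_Ici, not_le.2 ht, gauss_Ici m s hs]
  have fin1 : ∀ c : ℝ, 0 ≤ c → 1 / 2 ≤ l + (1 - l) * c →
      (1 / 2 : ℝ≥0∞) ≤ ENNReal.ofReal l + ENNReal.ofReal (1 - l) * ENNReal.ofReal c := by
    intro c hc h
    rw [← ENNReal.ofReal_mul h1l.le, ← ENNReal.ofReal_add hl0 (mul_nonneg h1l.le hc)]
    exact half_le_ofReal h
  have fin2 : ∀ c : ℝ, 1 / 2 ≤ (1 - l) * c →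
      (1 / 2 : ℝ≥0∞) ≤ ENNReal.ofReal (1 - l) * ENNReal.ofReal c := by
    intro c h
    rw [← ENNReal.ofReal_mul h1l.le]
    exact half_le_ofReal h
  rcases le_or_gt |m| (s * Q) with hcase | hcase
  · -- |m| ≤ s Q, so tstar = 0
    have ht0 : tstar = 0 := by
      rw [htstar, max_eq_right (by linarith), mul_zero]
    rw [ht0]
    have hms : m / s ≤ Q := by
      rw [div_le_iff₀ hs]
      linarith [le_abs_self m, mul_comm Q s]
    have hms' : -Q ≤ m / s := by
      rw [le_div_iff₀ hs]
      linarith [neg_abs_le m, mul_comm Q s]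
    refine ⟨?_, ?_, fun _ => hcase, fun _ => rfl⟩
    · rw [hIic 0 le_rfl]
      refine fin1 _ (stdNormalCDF_nonneg _) ?_
      have h2 : 1 - stdNormalCDF Q ≤ stdNormalCDF ((0 - m) / s) := by
        rw [show (0 - m) / s = -(m / s) by ring, stdNormalCDF_neg]
        have := stdNormalCDF_mono hms
        linarith
      nlinarith
    · rw [hIci 0 le_rfl]
      refine fin1 _ (by linarith [stdNormalCDF_le_one ((0 - m)/s)]) ?_
      have h2 : 1 - stdNormalCDF Q ≤ 1 - stdNormalCDF ((0 - m) / s) := by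
        rw [show (0 - m) / s = -(m / s) by ring, stdNormalCDF_neg]
        have h3 := stdNormalCDF_neg Q
        have := stdNormalCDF_mono hms'
        linarith
      nlinarith
  · -- s Q < |m|
    have hm0 : m ≠ 0 := by
      intro h
      rw [h, abs_zero] at hcase
      linarith
    rcases hm0.lt_or_gt with hm | hm
    · -- m < 0
      have hab : s * Q < -m := by rwa [abs_of_neg hm] at hcase
      have ht : tstar = m + s * Q := by
        rw [htstar, Real.sign_of_neg hm, abs_of_neg hm, max_eq_left (by linarith)]
        ring
      have htneg : tstar < 0 := by rw [ht]; linarith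
      have harg : (tstar - m) / s = Q := by
        rw [ht]; field_simp; ring
      refine ⟨?_, ?_, fun h => absurd (h ▸ htneg) (lt_irrefl 0),
        fun h => absurd hcase (not_lt.2 h)⟩
      · rw [hIic' tstar htneg, harg]
        exact fin2 _ (le_of_eq hkey2.symm)
      · rw [hIci tstar htneg.le, harg]
        exact fin1 _ (by linarith [stdNormalCDF_le_one Q]) (le_of_eq hkey1.symm)
    · -- 0 < m
      have hab : s * Q < m := by rwa [abs_of_pos hm] at hcase
      have ht : tstar = m - s * Q := by
        rw [htstar, Real.sign_of_pos hm, abs_of_pos hm, max_eq_left (by linarith), one_mul]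
      have htpos : 0 < tstar := by rw [ht]; linarith
      have harg : (tstar - m) / s = -Q := by
        rw [ht]; field_simp; ring
      refine ⟨?_, ?_, fun h => absurd (h ▸ htpos) (lt_irrefl 0),
        fun h => absurd hcase (not_lt.2 h)⟩
      · rw [hIic tstar htpos.le, harg, stdNormalCDF_neg]
        exact fin1 _ (by linarith [stdNormalCDF_le_one Q]) (le_of_eq hkey1.symm)
      · rw [hIci' tstar htpos, harg, stdNormalCDF_neg]
        have : 1 - (1 - stdNormalCDF Q) = stdNormalCDF Q := by ring
        rw [this]
        exact fin2 _ (le_of_eq hkey2.symm)
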